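/- Let S be a finite type and let the symmetric group Perm(S) act on reward vectors θ : S → ℝ by (σ · θ) = θ ∘ σ⁻¹. Let Θ be a set of reward vectors and let p₀, p₁ : (S → ℝ) → ℝ be arbitrary functions. Fix θ ∈ Θ, let Orbit_Θ(θ) := {θ' ∈ Θ | ∃ σ ∈ Perm(S), θ' = σ · θ}, O₊ := {θ' ∈ Orbit_Θ(θ) | p₁(θ') > p₀(θ')} and O₋ := {θ' ∈ Orbit_Θ(θ) | p₀(θ') > p₁(θ')}. Suppose there exists a set Φ of n permutations of S satisfying: (1) for every φ ∈ Φ and θ' ∈ O₋, p₁(φ · θ') > p₀(φ · θ'); (2) for every φ ∈ Φ and θ' ∈ O₋, φ · θ' ∈ Θ; (3) for distinct φ', φ'' ∈ Φ and all θ', θ'' ∈ O₋, φ' · θ' ≠ φ'' · θ''. Then (n + 1) · |O₊| ≥ n · (|O₊| + |O₋|); that is, among orbit elements with a strict preference, at least a fraction n/(n+1) prefer action set A₁. -/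
import Mathlib


/-- The action of a permutation `σ` of states on a reward vector `θ : S → ℝ`,
given by `(σ · θ) s = θ (σ⁻¹ s)`. -/
def permAct {S : Type*} (σ : Equiv.Perm S) (θ : S → ℝ) : S → ℝ := θ ∘ ⇑σ⁻¹

/-- The orbit of `θ` inside `Θ`: all permuted copies of `θ` lying in `Θ`. -/
def orbitIn {S : Type*} (Θ : Set (S → ℝ)) (θ : S → ℝ) : Set (S → ℝ) :=
  {θ' ∈ Θ | ∃ σ : Equiv.Perm S, θ' = permAct σ θ}

/-- The subset of the orbit of `θ` inside `Θ` on which `pA` strictly exceeds `pB`. -/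
def orbitPref {S : Type*} (Θ : Set (S → ℝ)) (pA pB : (S → ℝ) → ℝ) (θ : S → ℝ) :
    Set (S → ℝ) :=
  {θ' ∈ orbitIn Θ θ | pA θ' > pB θ'}

lemma permAct_mul {S : Type*} (φ σ : Equiv.Perm S) (θ : S → ℝ) :
    permAct φ (permAct σ θ) = permAct (φ * σ) θ := by
  funext s
  simp [permAct, mul_inv_rev]

lemma permAct_injective {S : Type*} (φ : Equiv.Perm S) :
    Function.Injective (permAct φ : (S → ℝ) → (S → ℝ)) := by
  intro a b h
  funext s
  have := congrFun h (φ s)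
  simpa [permAct] using this

lemma orbitIn_finite {S : Type*} [Fintype S] (Θ : Set (S → ℝ)) (θ : S → ℝ) :
    (orbitIn Θ θ).Finite := by
  apply Set.Finite.subset (Set.finite_range (fun σ : Equiv.Perm S => permAct σ θ))
  rintro x ⟨-, σ, rfl⟩
  exact ⟨σ, rfl⟩

/-- Quantitative form of the retargetability theorem: among orbit elements with a
strict preference, at least a fraction `n / (n + 1)` prefer action set `A₁`,
i.e. `(n + 1) * |O₊| ≥ n * (|O₊| + |O₋|)`. -/
theorem retargetable_majority_prefers_A1 {S : Type*} [Fintype S]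
    (Θ : Set (S → ℝ)) (p₀ p₁ : (S → ℝ) → ℝ) (θ : S → ℝ) (hθ : θ ∈ Θ)
    (n : ℕ) (Φ : Finset (Equiv.Perm S)) (hΦ : Φ.card = n)
    (h1 : ∀ φ ∈ Φ, ∀ θ' ∈ orbitPref Θ p₀ p₁ θ,
      p₁ (permAct φ θ') > p₀ (permAct φ θ'))
    (h2 : ∀ φ ∈ Φ, ∀ θ' ∈ orbitPref Θ p₀ p₁ θ, permAct φ θ' ∈ Θ)
    (h3 : ∀ φ' ∈ Φ, ∀ φ'' ∈ Φ, φ' ≠ φ'' →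
      ∀ θ' ∈ orbitPref Θ p₀ p₁ θ, ∀ θ'' ∈ orbitPref Θ p₀ p₁ θ,
        permAct φ' θ' ≠ permAct φ'' θ'') :
    (n + 1) * (orbitPref Θ p₁ p₀ θ).ncard ≥
      n * ((orbitPref Θ p₁ p₀ θ).ncard + (orbitPref Θ p₀ p₁ θ).ncard) := by
  classical
  set Oplus := orbitPref Θ p₁ p₀ θ with hOp
  set Ominus := orbitPref Θ p₀ p₁ θ with hOm
  have hfinP : Oplus.Finite :=
    (orbitIn_finite Θ θ).subset (fun x hx => hx.1)
  have hfinM : Ominus.Finite :=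
    (orbitIn_finite Θ θ).subset (fun x hx => hx.1)
  -- key claim: |Oplus| ≥ n * |Ominus|
  have key : n * Ominus.ncard ≤ Oplus.ncard := by
    have hmap : ∀ p ∈ Φ ×ˢ hfinM.toFinset,
        permAct (Prod.fst p) (Prod.snd p) ∈ hfinP.toFinset := by
      rintro ⟨φ, x⟩ hp
      rw [Finset.mem_product] at hp
      obtain ⟨hφ, hx⟩ := hp
      rw [Set.Finite.mem_toFinset] at hx ⊢
      obtain ⟨⟨hxΘ, σ, rfl⟩, hxp⟩ := hx
      refine ⟨⟨h2 φ hφ _ ⟨⟨hxΘ, σ, rfl⟩, hxp⟩, φ * σ, (permAct_mul φ σ θ).symm⟩,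
        h1 φ hφ _ ⟨⟨hxΘ, σ, rfl⟩, hxp⟩⟩
    have hinj : ∀ p ∈ Φ ×ˢ hfinM.toFinset, ∀ q ∈ Φ ×ˢ hfinM.toFinset,
        permAct (Prod.fst p) (Prod.snd p) = permAct (Prod.fst q) (Prod.snd q) →
        p = q := by
      rintro ⟨φ, x⟩ hp ⟨ψ, y⟩ hq h
      rw [Finset.mem_product] at hp hq
      obtain ⟨hφ, hx⟩ := hp
      obtain ⟨hψ, hy⟩ := hq
      rw [Set.Finite.mem_toFinset] at hx hy
      by_cases hφψ : φ = ψ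
      · subst hφψ
        exact Prod.ext rfl (permAct_injective φ h)
      · exact absurd h (h3 φ hφ ψ hψ hφψ x hx y hy)
    have hcard := Finset.card_le_card_of_injOn
      (fun p => permAct (Prod.fst p) (Prod.snd p)) hmap hinj
    rw [Finset.card_product, hΦ] at hcard
    rwa [← Set.ncard_eq_toFinset_card _ hfinM, ← Set.ncard_eq_toFinset_card _ hfinP]
      at hcard
  nlinarith [key]
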